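/- Uniqueness of the Filippov solution of the sediment storage dynamics: if w ≥ 0 and W is a sediment storage trajectory started at w, then W(t) = max{0, w − S·t} for all t ≥ 0. -/

import Mathlib

open Set MeasureTheory

/-- A sediment storage trajectory started at `w`: a continuous function `W : [0,∞) → ℝ`
satisfying the integral equation `W(t) = w − S·∫₀ᵗ 1_{W(s)>0} ds` for all `t ≥ 0`
(the Filippov solution of the discontinuous ODE `dW/dt = −S·1_{W>0}`). -/
def IsSedimentTrajectory (S w : ℝ) (W : ℝ → ℝ) : Prop :=
  ContinuousOn W (Ici 0) ∧
    ∀ t ≥ (0:ℝ), W t = w - S * ∫ s in (0:ℝ)..t, (if 0 < W s then (1:ℝ) else 0)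

/-- uniqueness of the Filippov solution of the sediment storage dynamics:
any trajectory started at `w ≥ 0` equals `max{0, w − S·t}`. -/
theorem sediment_trajectory_unique (S w : ℝ) (hS : 0 < S) (hw : 0 ≤ w)
    (W : ℝ → ℝ) (hW : IsSedimentTrajectory S w W) :
    ∀ t ≥ (0:ℝ), W t = max 0 (w - S * t) := by
  obtain ⟨hc, heq⟩ := hW
  set f : ℝ → ℝ := fun s => if 0 < W s then (1:ℝ) else 0 with hfdef
  have hf0 : ∀ s, 0 ≤ f s := by intro s; simp only [hfdef]; split <;> norm_num
  have hf1 : ∀ s, f s ≤ 1 := by intro s; simp only [hfdef]; split <;> norm_num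
  -- measurability
  obtain ⟨U, hU, hUeq⟩ := (continuousOn_iff'.mp hc) (Ioi 0) isOpen_Ioi
  set M : Set ℝ := U ∩ Ici 0 with hMdef
  have hM : MeasurableSet M := hU.measurableSet.inter measurableSet_Ici
  have hfM : ∀ s ∈ Ici (0:ℝ), f s = M.indicator (fun _ => (1:ℝ)) s := by
    intro s hs
    have : s ∈ W ⁻¹' Ioi 0 ∩ Ici 0 ↔ s ∈ M := by rw [hUeq]
    simp only [mem_inter_iff, mem_preimage, mem_Ioi, hs, and_true] at this
    by_cases h : 0 < W s
    · simp [hfdef, h, indicator_of_mem (this.mp h)]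
    · have : s ∉ M := fun hm => h (this.mpr hm)
      simp [hfdef, h, indicator_of_notMem this]
  have hgmeas : Measurable (M.indicator (fun _ => (1:ℝ))) :=
    measurable_const.indicator hM
  have hint : ∀ u t : ℝ, 0 ≤ u → u ≤ t → IntervalIntegrable f volume u t := by
    intro u t hu hut
    rw [intervalIntegrable_iff_integrableOn_Ioc_of_le hut]
    have h1 : IntegrableOn (M.indicator (fun _ => (1:ℝ))) (Ioc u t) := by
      refine Integrable.mono' (g := fun _ : ℝ => (1:ℝ))
        (integrableOn_const measure_Ioc_lt_top.ne)
        hgmeas.aestronglyMeasurable.restrict ?_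
      · refine ae_of_all _ fun s => ?_
        rw [Real.norm_eq_abs]
        by_cases h : s ∈ M <;> simp [h]
    apply h1.congr_fun _ measurableSet_Ioc
    intro s hs
    exact (hfM s (le_trans hu hs.1.le)).symm
  -- step equation
  have heq2 : ∀ u t : ℝ, 0 ≤ u → u ≤ t → W t = W u - S * ∫ s in u..t, f s := by
    intro u t hu hut
    have h1 := heq t (le_trans hu hut)
    have h2 := heq u hu
    have hadd := intervalIntegral.integral_add_adjacent_intervals
      (hint 0 u le_rfl hu) (hint u t hu hut)
    rw [h1, h2, ← hadd]; ring
  have hW0 : W 0 = w := by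
    have := heq 0 le_rfl; simpa using this
  -- monotone
  have hmono : ∀ u t : ℝ, 0 ≤ u → u ≤ t → W t ≤ W u := by
    intro u t hu hut
    have hI : 0 ≤ ∫ s in u..t, f s :=
      intervalIntegral.integral_nonneg hut (fun s _ => hf0 s)
    have := heq2 u t hu hut
    nlinarith
  -- W ≥ 0
  have hnonneg : ∀ t : ℝ, 0 ≤ t → 0 ≤ W t := by
    intro t ht
    by_contra hlt
    push_neg at hlt
    set K : Set ℝ := Icc 0 t ∩ W ⁻¹' Ici 0 with hKdef
    have hKcl : IsClosed K :=
      (hc.mono (Icc_subset_Ici_self)).preimage_isClosed_of_isClosed isClosed_Icc isClosed_Ici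
    have hKne : K.Nonempty := ⟨0, ⟨le_rfl, ht⟩, by simpa [hW0] using hw⟩
    have hKbdd : BddAbove K := BddAbove.mono (inter_subset_left) bddAbove_Icc
    set u := sSup K with hudef
    have huK : u ∈ K := hKcl.csSup_mem hKne hKbdd
    have hu0 : 0 ≤ u := huK.1.1
    have hut : u ≤ t := huK.1.2
    have hWu : 0 ≤ W u := huK.2
    have hune : u ≠ t := by intro h; rw [h] at hWu; linarith
    have hult : u < t := lt_of_le_of_ne hut hune
    have hneg : ∀ s ∈ Ioc u t, W s < 0 := by
      intro s hs
      by_contra hge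
      push_neg at hge
      have hsK : s ∈ K := ⟨⟨le_trans hu0 hs.1.le, hs.2⟩, hge⟩
      exact absurd (le_csSup hKbdd hsK) (not_le.mpr hs.1)
    have hI0 : (∫ s in u..t, f s) = 0 := by
      rw [← intervalIntegral.integral_zero (a := u) (b := t) (μ := volume)]
      apply intervalIntegral.integral_congr_ae
      refine ae_of_all _ fun s hs => ?_
      rw [uIoc_of_le hult.le] at hs
      have := hneg s hs
      simp only [hfdef]
      rw [if_neg (by linarith)]
    have := heq2 u t hu0 hut
    rw [hI0] at this
    simp at this
    linarith [hlt, hWu, this]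
  -- lower bound (not strictly needed? needed for phase 1)
  set T : ℝ := w / S with hTdef
  have hT0 : 0 ≤ T := div_nonneg hw hS.le
  have hST : S * T = w := by rw [hTdef]; field_simp
  -- on [0, T): W s > 0
  have hlow : ∀ s : ℝ, 0 ≤ s → w - S * s ≤ W s := by
    intro s hs
    have hI : (∫ x in (0:ℝ)..s, f x) ≤ ∫ x in (0:ℝ)..s, (1:ℝ) :=
      intervalIntegral.integral_mono_on hs (hint 0 s le_rfl hs)
        intervalIntegrable_const (fun x _ => hf1 x)
    rw [intervalIntegral.integral_const, smul_eq_mul, mul_one, sub_zero] at hI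
    have := heq s hs
    nlinarith
  have hphase1 : ∀ t : ℝ, 0 ≤ t → t ≤ T → W t = w - S * t := by
    intro t ht htT
    have hItt : (∫ s in (0:ℝ)..t, f s) = t := by
      have hcong : (∫ s in (0:ℝ)..t, f s) = ∫ s in (0:ℝ)..t, (1:ℝ) := by
        apply intervalIntegral.integral_congr_ae
        have hane : ∀ᵐ x : ℝ, x ≠ t := by
          have : (volume : Measure ℝ) {t} = 0 := measure_singleton t
          rw [MeasureTheory.ae_iff]
          convert this using 2
          ext x; simp
        filter_upwards [hane] with x hx hxI
        rw [uIoc_of_le ht] at hxI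
        have hxlt : x < t := lt_of_le_of_ne hxI.2 hx
        have hxT : x < T := lt_of_lt_of_le hxlt htT
        have : 0 < W x := by
          have := hlow x hxI.1.le
          nlinarith
        simp [hfdef, this]
      rw [hcong, intervalIntegral.integral_const, smul_eq_mul, mul_one, sub_zero]
    rw [heq t ht, hItt]
  -- conclude
  intro t ht
  rcases le_or_gt t T with h | h
  · rw [hphase1 t ht h, max_eq_right]
    nlinarith
  · have hWT : W T = 0 := by
      rw [hphase1 T hT0 le_rfl]; linarith
    have h1 : W t ≤ 0 := by
      have := hmono T t hT0 h.le; rw [hWT] at this; exact this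
    have h2 : 0 ≤ W t := hnonneg t ht
    rw [le_antisymm h1 h2]
    rw [max_eq_left]
    nlinarith
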